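/- Abelian part of the extended Karamata Tauberian theorem: Let U : (0,∞) → (0,∞) be continuous with U(0+) = 0 and of locally bounded variation, and suppose U ∈ 𝓜 with 𝓜-index -α where α > 0 (i.e., lim_{x→∞} log U(x)/log x = α). Define Û(s) := s ∫_0^∞ e^{-xs} U(x) dx for s > 0. Then lim_{s→∞} log(Û(1/s))/log(s) = α, i.e., s ↦ Û(1/s) belongs to 𝓜 with 𝓜-index -α. -/

import Mathlib

open Filter Real MeasureTheory Set

/-- `U ∈ 𝓜` with index `ρ`: positive and measurable on `(0,∞)`, bounded on finite
intervals, and for all `ε > 0`, `U(x)/x^(ρ+ε) → 0` and `U(x)/x^(ρ-ε) → ∞`. -/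
def MemM (U : ℝ → ℝ) (ρ : ℝ) : Prop :=
  (∀ x, 0 < x → 0 < U x) ∧ Measurable U ∧
  (∀ b, 0 < b → ∃ C, ∀ x, 0 < x → x ≤ b → U x ≤ C) ∧
  ∀ ε : ℝ, 0 < ε →
    Tendsto (fun x => U x / x ^ (ρ + ε)) atTop (nhds 0) ∧
    Tendsto (fun x => U x / x ^ (ρ - ε)) atTop atTop

lemma integrableOn_exp_mul_rpow {r p : ℝ} (hr : 0 < r) (hp : -1 < p) :
    IntegrableOn (fun x : ℝ => Real.exp (-(x * r)) * x ^ p) (Ioi 0) := by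
  have h1 : IntegrableOn (fun x : ℝ => Real.exp (-x) * x ^ p) (Ioi 0) := by
    have := Real.GammaIntegral_convergent (s := p + 1) (by linarith)
    simpa using this
  have h2 : IntegrableOn (fun x : ℝ => Real.exp (-(r * x)) * (r * x) ^ p) (Ioi 0) := by
    have := (integrableOn_Ioi_comp_mul_left_iff
      (fun x : ℝ => Real.exp (-x) * x ^ p) 0 hr).mpr
    simpa using this (by simpa using h1)
  have h3 : IntegrableOn (fun x : ℝ => (r ^ p)⁻¹ *
      (Real.exp (-(r * x)) * (r * x) ^ p)) (Ioi 0) := h2.const_mul _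
  refine h3.congr_fun (fun x hx => ?_) measurableSet_Ioi
  have hx0 : (0:ℝ) < x := hx
  beta_reduce
  rw [Real.mul_rpow hr.le hx0.le]
  have : (r : ℝ) ^ p ≠ 0 := (Real.rpow_pos_of_pos hr p).ne'
  field_simp

lemma integral_exp_mul_rpow {r p : ℝ} (hr : 0 < r) (hp : -1 < p) :
    ∫ x in Ioi (0:ℝ), Real.exp (-(x * r)) * x ^ p
      = (1 / r) ^ (p + 1) * Real.Gamma (p + 1) := by
  rw [← Real.integral_rpow_mul_exp_neg_mul_Ioi (a := p + 1) (by linarith) hr]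
  refine setIntegral_congr_fun measurableSet_Ioi (fun x hx => ?_)
  simp [mul_comm, add_sub_cancel_right]

lemma aux_integrable (U : ℝ → ℝ) (hcont : ContinuousOn U (Set.Ioi 0)) {r p C X₀ : ℝ}
    (hr : 0 < r) (hp : -1 < p) (hX₀ : 0 < X₀)
    (hC : ∀ x, 0 < x → x ≤ X₀ → |U x| ≤ C)
    (hU : ∀ x, X₀ ≤ x → |U x| ≤ x ^ p) :
    IntegrableOn (fun x => Real.exp (-(x * r)) * U x) (Ioi 0) := by
  have hmeas : AEStronglyMeasurable (fun x => Real.exp (-(x * r)) * U x)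
      (volume.restrict (Ioi (0:ℝ))) := by
    refine ContinuousOn.aestronglyMeasurable ?_ measurableSet_Ioi
    exact ((Real.continuous_exp.comp (by continuity)).continuousOn).mul hcont
  rw [← Ioc_union_Ioi_eq_Ioi hX₀.le, integrableOn_union]
  constructor
  · refine Integrable.mono' (g := fun _ => C)
      (integrableOn_const measure_Ioc_lt_top.ne)
      (hmeas.mono_set Ioc_subset_Ioi_self) ?_
    refine (ae_restrict_iff' measurableSet_Ioc).2 (ae_of_all _ fun x hx => ?_)
    have hx0 : 0 < x := hx.1
    have h1 : Real.exp (-(x * r)) ≤ 1 := by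
      rw [Real.exp_le_one_iff]
      nlinarith
    calc ‖Real.exp (-(x * r)) * U x‖ = Real.exp (-(x * r)) * |U x| := by
          rw [norm_mul, Real.norm_eq_abs, Real.norm_eq_abs, abs_of_pos (Real.exp_pos _)]
      _ ≤ 1 * C := by
          apply mul_le_mul h1 (hC x hx0 hx.2) (abs_nonneg _)
          norm_num
      _ = C := one_mul C
  · refine Integrable.mono' (g := fun x => Real.exp (-(x * r)) * x ^ p)
      ((integrableOn_exp_mul_rpow hr hp).mono_set
        (Ioi_subset_Ioi hX₀.le))
      (hmeas.mono_set (Ioi_subset_Ioi hX₀.le)) ?_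
    refine (ae_restrict_iff' measurableSet_Ioi).2 (ae_of_all _ fun x hx => ?_)
    have hx0 : X₀ < x := hx
    calc ‖Real.exp (-(x * r)) * U x‖ = Real.exp (-(x * r)) * |U x| := by
          rw [norm_mul, Real.norm_eq_abs, Real.norm_eq_abs, abs_of_pos (Real.exp_pos _)]
      _ ≤ Real.exp (-(x * r)) * x ^ p :=
          mul_le_mul_of_nonneg_left (hU x hx0.le) (Real.exp_pos _).le

lemma aux_ev_bounds {U : ℝ → ℝ} {α : ℝ}
    (hpos : ∀ x, 0 < x → 0 < U x)
    (hlog : Tendsto (fun x => Real.log (U x) / Real.log x) atTop (nhds α))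
    {ε : ℝ} (hε : 0 < ε) :
    ∀ᶠ x : ℝ in atTop, U x ≤ x ^ (α + ε) ∧ x ^ (α - ε) ≤ U x := by
  have h1 : ∀ᶠ x : ℝ in atTop, |Real.log (U x) / Real.log x - α| < ε := by
    have := Metric.tendsto_nhds.1 hlog ε hε
    simpa [Real.dist_eq] using this
  filter_upwards [h1, eventually_gt_atTop 1] with x hx hx1
  have hlx : 0 < Real.log x := Real.log_pos hx1
  have hx0 : (0:ℝ) < x := by linarith
  have hUx : 0 < U x := hpos x hx0
  obtain ⟨hl, hu⟩ := abs_lt.1 hx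
  have h2 : Real.log (U x) < (α + ε) * Real.log x := by
    have := (div_lt_iff₀ hlx).1 (by linarith : Real.log (U x) / Real.log x < α + ε)
    linarith
  have h3 : (α - ε) * Real.log x < Real.log (U x) := by
    have := (lt_div_iff₀ hlx).1 (by linarith : α - ε < Real.log (U x) / Real.log x)
    linarith
  constructor
  · calc U x = Real.exp (Real.log (U x)) := (Real.exp_log hUx).symm
      _ ≤ Real.exp ((α + ε) * Real.log x) := Real.exp_le_exp.2 h2.le
      _ = x ^ (α + ε) := by rw [Real.rpow_def_of_pos hx0, mul_comm]
  · calc x ^ (α - ε) = Real.exp ((α - ε) * Real.log x) := by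
          rw [Real.rpow_def_of_pos hx0, mul_comm]
      _ ≤ Real.exp (Real.log (U x)) := Real.exp_le_exp.2 h3.le
      _ = U x := Real.exp_log hUx

lemma aux_bdd {U : ℝ → ℝ} (hcont : ContinuousOn U (Set.Ioi 0))
    (h0 : Tendsto U (nhdsWithin 0 (Set.Ioi 0)) (nhds 0)) {b : ℝ} (hb : 0 < b) :
    ∃ C, 1 ≤ C ∧ ∀ x, 0 < x → x ≤ b → |U x| ≤ C := by
  have h1 : ∀ᶠ x in nhdsWithin 0 (Set.Ioi 0), |U x| < 1 := by
    have := Metric.tendsto_nhds.1 h0 1 one_pos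
    simpa [Real.dist_eq] using this
  rw [Filter.Eventually, Metric.mem_nhdsWithin_iff] at h1
  obtain ⟨δ, hδ, hδ1⟩ := h1
  set a := min (δ / 2) b with ha
  have ha0 : 0 < a := lt_min (by linarith) hb
  have hcomp : IsCompact (Icc a b) := isCompact_Icc
  obtain ⟨C', hC'⟩ := hcomp.exists_bound_of_continuousOn
    (hcont.mono (fun x hx => lt_of_lt_of_le ha0 hx.1))
  refine ⟨max 1 C', le_max_left _ _, fun x hx hxb => ?_⟩
  rcases lt_or_ge x a with h | h
  · have hmem : x ∈ Metric.ball (0:ℝ) δ ∩ Ioi 0 := by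
      constructor
      · rw [Metric.mem_ball, Real.dist_eq, sub_zero, abs_of_pos hx]
        have := min_le_left (δ / 2) b
        linarith [lt_of_lt_of_le h this]
      · exact hx
    exact le_trans (hδ1 hmem).le (le_max_left _ _)
  · have := hC' x ⟨h, hxb⟩
    rw [Real.norm_eq_abs] at this
    exact le_trans this (le_max_right _ _)

theorem abelian_karamata_tauberian (U : ℝ → ℝ) (α : ℝ) (hα : 0 < α)
    (hpos : ∀ x, 0 < x → 0 < U x)
    (hcont : ContinuousOn U (Set.Ioi 0))
    (h0 : Tendsto U (nhdsWithin 0 (Set.Ioi 0)) (nhds 0))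
    (hBV : LocallyBoundedVariationOn U (Set.Ioi 0))
    (hlog : Tendsto (fun x => Real.log (U x) / Real.log x) atTop (nhds α)) :
    Tendsto
      (fun s => Real.log ((1 / s) * ∫ x in Set.Ioi (0 : ℝ), Real.exp (-(x * (1 / s))) * U x)
        / Real.log s) atTop (nhds α) := by
  rw [Metric.tendsto_nhds]
  intro δ hδ
  set ε := min (δ / 4) (α / 2) with hε_def
  have hε : 0 < ε := lt_min (by linarith) (by linarith)
  have hεδ : ε ≤ δ / 4 := min_le_left _ _
  have hεα : ε ≤ α / 2 := min_le_right _ _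
  have hαε1 : (-1:ℝ) < α + ε := by linarith
  have hαε0 : (0:ℝ) < α - ε := by linarith
  -- pointwise bounds for large x
  obtain ⟨X₀, hX₀⟩ := eventually_atTop.1 (aux_ev_bounds hpos hlog hε)
  set X₁ : ℝ := max X₀ 1 with hX₁_def
  have hX₁1 : (1:ℝ) ≤ X₁ := le_max_right _ _
  have hX₁0 : (0:ℝ) < X₁ := by linarith
  have hbound : ∀ x, X₁ ≤ x → U x ≤ x ^ (α + ε) ∧ x ^ (α - ε) ≤ U x :=
    fun x hx => hX₀ x (le_trans (le_max_left _ _) hx)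
  -- bound near zero
  obtain ⟨C, hC1, hCb⟩ := aux_bdd hcont h0 hX₁0
  set K : ℝ := C * X₁ + Real.Gamma (α + ε + 1) with hK_def
  have hΓpos : 0 < Real.Gamma (α + ε + 1) := Real.Gamma_pos_of_pos (by linarith)
  have hK1 : 1 ≤ K := by nlinarith
  -- integrability
  have habs : ∀ x, X₁ ≤ x → |U x| ≤ x ^ (α + ε) := fun x hx => by
    rw [abs_of_pos (hpos x (by linarith))]; exact (hbound x hx).1
  have hint : ∀ s : ℝ, 0 < s →
      IntegrableOn (fun x => Real.exp (-(x * (1 / s))) * U x) (Ioi 0) :=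
    fun s hs => aux_integrable U hcont (by positivity) hαε1 hX₁0 hCb habs
  -- main eventual bounds on the transform
  have main : ∀ s : ℝ, max X₁ 2 ≤ s →
      Real.exp (-2) * s ^ (α - ε) ≤
        (1 / s) * ∫ x in Ioi (0:ℝ), Real.exp (-(x * (1 / s))) * U x ∧
      (1 / s) * (∫ x in Ioi (0:ℝ), Real.exp (-(x * (1 / s))) * U x) ≤ K * s ^ (α + ε) := by
    intro s hs
    have hsX₁ : X₁ ≤ s := le_trans (le_max_left _ _) hs
    have hs1 : (1:ℝ) ≤ s := le_trans hX₁1 hsX₁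
    have hs0 : (0:ℝ) < s := by linarith
    have hr0 : (0:ℝ) < 1 / s := by positivity
    set f : ℝ → ℝ := fun x => Real.exp (-(x * (1 / s))) * U x with hf_def
    have hfint : IntegrableOn f (Ioi 0) := hint s hs0
    have hfnonneg : ∀ x ∈ Ioi (0:ℝ), 0 ≤ f x := fun x hx =>
      mul_nonneg (Real.exp_pos _).le (hpos x hx).le
    constructor
    · -- lower bound
      have h1 : ∫ x in Ioc s (2 * s), f x ≤ ∫ x in Ioi (0:ℝ), f x := by
        refine setIntegral_mono_set hfint ?_ ?_
        · exact (ae_restrict_iff' measurableSet_Ioi).2 (ae_of_all _ hfnonneg)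
        · exact HasSubset.Subset.eventuallyLE (fun x hx => lt_of_lt_of_le hs0 hx.1.le)
      have h2 : ∫ x in Ioc s (2 * s), (Real.exp (-2) * s ^ (α - ε)) ≤
          ∫ x in Ioc s (2 * s), f x := by
        refine setIntegral_mono_on (integrableOn_const measure_Ioc_lt_top.ne)
          (hfint.mono_set (fun x hx => lt_of_lt_of_le hs0 hx.1.le)) measurableSet_Ioc ?_
        intro x hx
        have hx1 : s < x := hx.1
        have hx2 : x ≤ 2 * s := hx.2
        have hxpos : 0 < x := lt_trans hs0 hx1
        have he : Real.exp (-2) ≤ Real.exp (-(x * (1 / s))) := by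
          have hxs : x * (1 / s) ≤ 2 := by
            rw [mul_one_div, div_le_iff₀ hs0]; linarith
          rw [Real.exp_le_exp]; linarith
        have hU : s ^ (α - ε) ≤ U x := by
          calc s ^ (α - ε) ≤ x ^ (α - ε) :=
                Real.rpow_le_rpow hs0.le hx1.le (by linarith)
            _ ≤ U x := (hbound x (le_trans hsX₁ hx1.le)).2
        calc Real.exp (-2) * s ^ (α - ε) ≤ Real.exp (-(x * (1 / s))) * U x := by
              apply mul_le_mul he hU (Real.rpow_pos_of_pos hs0 _).le (Real.exp_pos _).le
          _ = f x := rfl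
      have h3 : ∫ x in Ioc s (2 * s), (Real.exp (-2) * s ^ (α - ε)) =
          s * (Real.exp (-2) * s ^ (α - ε)) := by
        rw [setIntegral_const, Real.volume_real_Ioc_of_le (by linarith), smul_eq_mul]
        ring_nf
      have : s * (Real.exp (-2) * s ^ (α - ε)) ≤ ∫ x in Ioi (0:ℝ), f x := by
        rw [← h3]; exact le_trans h2 h1
      calc Real.exp (-2) * s ^ (α - ε)
          = (1 / s) * (s * (Real.exp (-2) * s ^ (α - ε))) := by field_simp
        _ ≤ (1 / s) * ∫ x in Ioi (0:ℝ), f x :=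
            mul_le_mul_of_nonneg_left this (by positivity)
    · -- upper bound
      have hsplit : ∫ x in Ioi (0:ℝ), f x =
          (∫ x in Ioc 0 X₁, f x) + ∫ x in Ioi X₁, f x := by
        rw [← setIntegral_union Ioc_disjoint_Ioi_same measurableSet_Ioi
          (hfint.mono_set Ioc_subset_Ioi_self)
          (hfint.mono_set (Ioi_subset_Ioi hX₁0.le)),
          Ioc_union_Ioi_eq_Ioi hX₁0.le]
      have h1 : ∫ x in Ioc 0 X₁, f x ≤ C * X₁ := by
        calc ∫ x in Ioc 0 X₁, f x ≤ ∫ _x in Ioc 0 X₁, C := by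
              refine setIntegral_mono_on (hfint.mono_set Ioc_subset_Ioi_self)
                (integrableOn_const measure_Ioc_lt_top.ne) measurableSet_Ioc ?_
              intro x hx
              have hx0 : 0 < x := hx.1
              have he : Real.exp (-(x * (1 / s))) ≤ 1 := by
                rw [Real.exp_le_one_iff]
                have : 0 ≤ x * (1 / s) := by positivity
                linarith
              calc f x ≤ 1 * U x :=
                    mul_le_mul_of_nonneg_right he (hpos x hx0).le
                _ = U x := one_mul _
                _ ≤ |U x| := le_abs_self _
                _ ≤ C := hCb x hx0 hx.2
          _ = C * X₁ := by
              rw [setIntegral_const, Real.volume_real_Ioc_of_le (by linarith), smul_eq_mul]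
              ring
      have h2 : ∫ x in Ioi X₁, f x ≤ s ^ (α + ε + 1) * Real.Gamma (α + ε + 1) := by
        calc ∫ x in Ioi X₁, f x
            ≤ ∫ x in Ioi X₁, Real.exp (-(x * (1 / s))) * x ^ (α + ε) := by
              refine setIntegral_mono_on (hfint.mono_set (Ioi_subset_Ioi hX₁0.le))
                ((integrableOn_exp_mul_rpow hr0 hαε1).mono_set
                  (Ioi_subset_Ioi hX₁0.le)) measurableSet_Ioi ?_
              intro x hx
              exact mul_le_mul_of_nonneg_left (hbound x (le_of_lt hx)).1
                (Real.exp_pos _).le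
          _ ≤ ∫ x in Ioi (0:ℝ), Real.exp (-(x * (1 / s))) * x ^ (α + ε) := by
              refine setIntegral_mono_set (integrableOn_exp_mul_rpow hr0 hαε1) ?_ ?_
              · refine (ae_restrict_iff' measurableSet_Ioi).2 (ae_of_all _ ?_)
                intro x hx
                exact mul_nonneg (Real.exp_pos _).le (Real.rpow_pos_of_pos hx _).le
              · exact HasSubset.Subset.eventuallyLE (Ioi_subset_Ioi hX₁0.le)
          _ = (1 / (1 / s)) ^ (α + ε + 1) * Real.Gamma (α + ε + 1) :=
              integral_exp_mul_rpow hr0 hαε1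
          _ = s ^ (α + ε + 1) * Real.Gamma (α + ε + 1) := by
              rw [one_div_one_div]
      have hs_pow : (1:ℝ) ≤ s ^ (α + ε) :=
        Real.one_le_rpow hs1 (by linarith)
      calc (1 / s) * ∫ x in Ioi (0:ℝ), f x
          ≤ (1 / s) * (C * X₁ + s ^ (α + ε + 1) * Real.Gamma (α + ε + 1)) := by
            apply mul_le_mul_of_nonneg_left _ (by positivity)
            rw [hsplit]; exact add_le_add h1 h2
        _ = C * X₁ / s + s ^ (α + ε) * Real.Gamma (α + ε + 1) := by
            rw [Real.rpow_add_one hs0.ne' (α + ε)]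
            field_simp
        _ ≤ C * X₁ * s ^ (α + ε) + s ^ (α + ε) * Real.Gamma (α + ε + 1) := by
            have hCX : (0:ℝ) < C * X₁ := by positivity
            have h4 : C * X₁ / s ≤ C * X₁ := by
              rw [div_le_iff₀ hs0]
              nlinarith
            have h5 : C * X₁ ≤ C * X₁ * s ^ (α + ε) := by
              nlinarith
            linarith
        _ = K * s ^ (α + ε) := by rw [hK_def]; ring
  -- conclude
  have hlogK0 : 0 ≤ Real.log K := Real.log_nonneg hK1
  have hev1 : ∀ᶠ s : ℝ in atTop, Real.log K / Real.log s ≤ δ / 4 := by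
    have h := Real.tendsto_log_atTop.eventually_ge_atTop (4 * Real.log K / δ + 1)
    filter_upwards [h, eventually_gt_atTop 1] with s h1 h2
    have hls : 0 < Real.log s := Real.log_pos h2
    rw [div_le_iff₀ hls]
    have : 4 * Real.log K / δ ≤ Real.log s := by linarith
    rw [div_le_iff₀ hδ] at this
    nlinarith
  have hev2 : ∀ᶠ s : ℝ in atTop, 2 / Real.log s ≤ δ / 4 := by
    have h := Real.tendsto_log_atTop.eventually_ge_atTop (8 / δ + 1)
    filter_upwards [h, eventually_gt_atTop 1] with s h1 h2
    have hls : 0 < Real.log s := Real.log_pos h2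
    rw [div_le_iff₀ hls]
    have : 8 / δ ≤ Real.log s := by linarith
    rw [div_le_iff₀ hδ] at this
    nlinarith
  filter_upwards [eventually_ge_atTop (max X₁ 2), eventually_gt_atTop 1, hev1, hev2]
    with s hs hs1 h1 h2
  obtain ⟨hlow, hup⟩ := main s hs
  have hs0 : (0:ℝ) < s := by linarith
  have hls : 0 < Real.log s := Real.log_pos hs1
  set V : ℝ := (1 / s) * ∫ x in Ioi (0:ℝ), Real.exp (-(x * (1 / s))) * U x with hV_def
  have hVpos : 0 < V := lt_of_lt_of_le (by positivity) hlow
  have hupper : Real.log V / Real.log s ≤ α + ε + δ / 4 := by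
    have hlogV : Real.log V ≤ Real.log K + (α + ε) * Real.log s := by
      calc Real.log V ≤ Real.log (K * s ^ (α + ε)) := Real.log_le_log hVpos hup
        _ = Real.log K + (α + ε) * Real.log s := by
            rw [Real.log_mul (by linarith) (Real.rpow_pos_of_pos hs0 _).ne',
              Real.log_rpow hs0]
    calc Real.log V / Real.log s ≤ (Real.log K + (α + ε) * Real.log s) / Real.log s :=
          div_le_div_of_nonneg_right hlogV hls.le
      _ = Real.log K / Real.log s + (α + ε) := by field_simp
      _ ≤ δ / 4 + (α + ε) := by linarith
      _ = α + ε + δ / 4 := by ring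
  have hlower : α - ε - δ / 4 ≤ Real.log V / Real.log s := by
    have hlogV : -2 + (α - ε) * Real.log s ≤ Real.log V := by
      calc (-2:ℝ) + (α - ε) * Real.log s
          = Real.log (Real.exp (-2) * s ^ (α - ε)) := by
            rw [Real.log_mul (Real.exp_pos _).ne' (Real.rpow_pos_of_pos hs0 _).ne',
              Real.log_exp, Real.log_rpow hs0]
        _ ≤ Real.log V := Real.log_le_log (by positivity) hlow
    calc α - ε - δ / 4 ≤ α - ε - 2 / Real.log s := by linarith
      _ = (-2 + (α - ε) * Real.log s) / Real.log s := by field_simp; ring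
      _ ≤ Real.log V / Real.log s := div_le_div_of_nonneg_right hlogV hls.le
  rw [Real.dist_eq, abs_lt]
  constructor <;> [skip; skip]
  · have : α - δ / 2 ≤ Real.log V / Real.log s := by linarith
    linarith
  · have : Real.log V / Real.log s ≤ α + δ / 2 := by linarith
    linarith
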